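/- For c > 1 and δ > 0, the potential G(u) = δc·[(1/6)u³ − (c/2)u² − u + c·ln(c/(c−u))] on (0, c) has a strict local minimum at u₀ = (3c − √(c²+8))/2 and tends to +∞ as u → c⁻. -/

import Mathlib

open Filter Set

theorem potential_min_and_blowup (δ c : ℝ) (hδ : 0 < δ) (hc : 1 < c) :
    let G : ℝ → ℝ := fun u =>
      δ * c * (1 / 6 * u ^ 3 - c / 2 * u ^ 2 - u + c * Real.log (c / (c - u)))
    let u₀ : ℝ := (3 * c - Real.sqrt (c ^ 2 + 8)) / 2
    (∀ᶠ u in nhdsWithin u₀ {u₀}ᶜ, G u₀ < G u) ∧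
    Filter.Tendsto G (nhdsWithin c (Set.Iio c)) Filter.atTop := by
  intro G u₀
  have hc0 : (0 : ℝ) < c := by linarith
  have hδc : (0 : ℝ) < δ * c := by positivity
  set s : ℝ := Real.sqrt (c ^ 2 + 8) with hs_def
  have hs2 : s ^ 2 = c ^ 2 + 8 := Real.sq_sqrt (by positivity)
  have hs0 : 0 ≤ s := Real.sqrt_nonneg _
  have hsc : c < s := by nlinarith
  have hs3c : s < 3 * c := by nlinarith
  set u₁ : ℝ := (3 * c + s) / 2 with hu₁_def
  have hu₀ : u₀ = (3 * c - s) / 2 := rfl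
  have hu₀pos : 0 < u₀ := by rw [hu₀]; linarith
  have hu₀c : u₀ < c := by rw [hu₀]; linarith
  have hu₁c : c < u₁ := by rw [hu₁_def]; linarith
  -- derivative of G at any x < c
  have hderiv : ∀ x : ℝ, x < c →
      HasDerivAt G (δ * c * (x ^ 2 / 2 - c * x - 1 + c / (c - x))) x := by
    intro x hx
    have hcx : c - x ≠ 0 := by linarith
    have hlog : HasDerivAt (fun u : ℝ => Real.log (c - u)) (-1 / (c - x)) x := by
      have h1 : HasDerivAt (fun u : ℝ => c - u) (-1) x := (hasDerivAt_id x).const_sub c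
      simpa using h1.log hcx
    have hH : HasDerivAt (fun u : ℝ =>
        δ * c * (1 / 6 * u ^ 3 - c / 2 * u ^ 2 - u + c * (Real.log c - Real.log (c - u))))
        (δ * c * (x ^ 2 / 2 - c * x - 1 + c / (c - x))) x := by
      have hpoly : HasDerivAt (fun u : ℝ => 1 / 6 * u ^ 3 - c / 2 * u ^ 2 - u)
          (x ^ 2 / 2 - c * x - 1) x := by
        have h3 : HasDerivAt (fun u : ℝ => u ^ 3) (3 * x ^ 2) x := by
          simpa using hasDerivAt_pow 3 x
        have h2 : HasDerivAt (fun u : ℝ => u ^ 2) (2 * x) x := by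
          simpa using hasDerivAt_pow 2 x
        have := (((h3.const_mul (1 / 6 : ℝ)).sub (h2.const_mul (c / 2))).sub (hasDerivAt_id x))
        exact this.congr_deriv (by ring)
      have hl2 : HasDerivAt (fun u : ℝ => c * (Real.log c - Real.log (c - u)))
          (c / (c - x)) x := by
        have := ((hasDerivAt_const x (Real.log c)).sub hlog).const_mul c
        exact this.congr_deriv (by ring)
      exact (hpoly.add hl2).const_mul (δ * c)
    refine hH.congr_of_eventuallyEq ?_
    filter_upwards [Iio_mem_nhds hx] with u hu
    simp only [Set.mem_Iio] at hu
    have h1 : c - u ≠ 0 := by intro h; linarith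
    show G u = _
    simp only [G]
    rw [Real.log_div (ne_of_gt hc0) h1]
  -- key algebraic identity
  have hkey : ∀ x : ℝ, x < c →
      x ^ 2 / 2 - c * x - 1 + c / (c - x) = x * (x - u₀) * (u₁ - x) / (2 * (c - x)) := by
    intro x hx
    have hcx : c - x ≠ 0 := by linarith
    rw [hu₀, hu₁_def]
    field_simp
    ring_nf
    linear_combination (-x) * hs2
  -- monotonicity on both sides of u₀
  set a : ℝ := u₀ / 2 with ha_def
  set b : ℝ := (u₀ + c) / 2 with hb_def
  have hau : a < u₀ := by rw [ha_def]; linarith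
  have hub : u₀ < b := by rw [hb_def]; linarith
  have hbc : b < c := by rw [hb_def]; linarith
  have hanti : StrictAntiOn G (Icc a u₀) := by
    apply strictAntiOn_of_deriv_neg (convex_Icc a u₀)
    · intro x hx
      have hxc : x < c := lt_of_le_of_lt hx.2 hu₀c
      exact (hderiv x hxc).continuousAt.continuousWithinAt
    · intro x hx
      rw [interior_Icc] at hx
      have hx0 : 0 < x := by have := hx.1; rw [ha_def] at this; linarith
      have hxc : x < c := lt_trans hx.2 hu₀c
      rw [(hderiv x hxc).deriv, hkey x hxc]
      apply mul_neg_of_pos_of_neg hδc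
      apply div_neg_of_neg_of_pos
      · apply mul_neg_of_neg_of_pos
        · exact mul_neg_of_pos_of_neg hx0 (by linarith [hx.2])
        · linarith
      · linarith
  have hmono : StrictMonoOn G (Icc u₀ b) := by
    apply strictMonoOn_of_deriv_pos (convex_Icc u₀ b)
    · intro x hx
      have hxc : x < c := lt_of_le_of_lt hx.2 hbc
      exact (hderiv x hxc).continuousAt.continuousWithinAt
    · intro x hx
      rw [interior_Icc] at hx
      have hx0 : 0 < x := lt_trans hu₀pos hx.1
      have hxc : x < c := lt_trans hx.2 hbc
      rw [(hderiv x hxc).deriv, hkey x hxc]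
      apply mul_pos hδc
      apply div_pos
      · exact mul_pos (mul_pos hx0 (by linarith [hx.1])) (by linarith)
      · linarith
  constructor
  · filter_upwards [mem_nhdsWithin_of_mem_nhds (Ioo_mem_nhds hau hub), self_mem_nhdsWithin]
      with u hu hne
    have hne' : u ≠ u₀ := hne
    rcases lt_or_gt_of_ne hne' with h | h
    · exact hanti ⟨le_of_lt hu.1, le_of_lt h⟩ ⟨le_of_lt hau, le_refl _⟩ h
    · exact hmono ⟨le_refl _, le_of_lt hub⟩ ⟨le_of_lt h, le_of_lt hu.2⟩ h
  · -- blow-up at c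
    have hlog : Tendsto (fun u : ℝ => Real.log (c - u)) (nhdsWithin c (Set.Iio c)) atBot := by
      have h1 : Tendsto (fun u : ℝ => c - u) (nhdsWithin c (Set.Iio c)) (nhdsWithin 0 (Set.Ioi 0)) := by
        apply tendsto_nhdsWithin_of_tendsto_nhds_of_eventually_within
        · have h0 : Tendsto (fun u : ℝ => c - u) (nhds c) (nhds 0) :=
            Continuous.tendsto' (by fun_prop) c 0 (by ring)
          exact h0.mono_left nhdsWithin_le_nhds
        · filter_upwards [self_mem_nhdsWithin] with u hu
          simp only [Set.mem_Iio] at hu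
          exact sub_pos.mpr hu
      exact Real.tendsto_log_nhdsGT_zero.comp h1
    have h2 : Tendsto (fun u : ℝ => (-(δ * c ^ 2)) * Real.log (c - u))
        (nhdsWithin c (Set.Iio c)) atTop :=
      hlog.const_mul_atBot_of_neg (by nlinarith)
    have h1 : Tendsto (fun u : ℝ => δ * c * (1 / 6 * u ^ 3 - c / 2 * u ^ 2 - u) + δ * c ^ 2 * Real.log c)
        (nhdsWithin c (Set.Iio c))
        (nhds (δ * c * (1 / 6 * c ^ 3 - c / 2 * c ^ 2 - c) + δ * c ^ 2 * Real.log c)) := by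
      apply Tendsto.mono_left _ nhdsWithin_le_nhds
      apply Continuous.tendsto
      fun_prop
    have hsum := h1.add_atTop h2
    apply hsum.congr'
    filter_upwards [self_mem_nhdsWithin] with u hu
    simp only [Set.mem_Iio] at hu
    have h3 : c - u ≠ 0 := by linarith
    show _ = G u
    simp only [G]
    rw [Real.log_div (ne_of_gt hc0) h3]
    ring
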